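/- arXiv:0801.4040 — 2 statements merged into one kernel-verified Lean document; each statement's English description precedes it below -/
import Mathlib

section
/- For all real x ≥ 1 and all integers l ≥ 1, the sum over m ≥ 1 of binomial(m+l-1, l) · x^m / m! is at most (4x)^l · e^x. -/
open Finset

lemma myChoose_le_two_pow (n k : ℕ) : n.choose k ≤ 2 ^ n := by
  rcases le_or_gt k n with h | h
  · calc n.choose k ≤ ∑ i ∈ range (n + 1), n.choose i :=
        Finset.single_le_sum (fun _ _ => Nat.zero_le _) (Finset.mem_range.2 (by omega))
      _ = 2 ^ n := Nat.sum_range_choose n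
  · simp [Nat.choose_eq_zero_of_lt h]

lemma myDescFactorial_mono {j l n : ℕ} (hjl : j ≤ l) (hln : l ≤ n) :
    n.descFactorial j ≤ n.descFactorial l := by
  have h := Nat.descFactorial_mul_descFactorial (n := n) hjl
  have hp : 0 < (n - j).descFactorial (l - j) := by
    rw [Nat.descFactorial_eq_factorial_mul_choose]
    exact Nat.mul_pos (Nat.factorial_pos _) (Nat.choose_pos (by omega))
  calc n.descFactorial j ≤ (n - j).descFactorial (l - j) * n.descFactorial j :=
        Nat.le_mul_of_pos_left _ hp
    _ = n.descFactorial l := h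

lemma myKey {l n : ℕ} (hl : 1 ≤ l) (hln : l ≤ n) :
    (n + l - 1).choose l ≤ 2 ^ (2 * l - 1) * n.descFactorial l := by
  have h1 : n + l - 1 = (2 * l - 1) + (n - l) := by omega
  rw [h1, Nat.add_choose_eq]
  calc ∑ ij ∈ antidiagonal l, (2 * l - 1).choose ij.1 * (n - l).choose ij.2
      ≤ ∑ ij ∈ antidiagonal l, (2 * l - 1).choose ij.1 * n.descFactorial l := by
        refine Finset.sum_le_sum fun ij hij => Nat.mul_le_mul_left _ ?_
        have hij2 : ij.1 + ij.2 = l := Finset.HasAntidiagonal.mem_antidiagonal.mp hij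
        calc (n - l).choose ij.2 ≤ n.choose ij.2 := Nat.choose_le_choose _ (by omega)
          _ ≤ n.descFactorial ij.2 := Nat.choose_le_descFactorial n ij.2
          _ ≤ n.descFactorial l := myDescFactorial_mono (by omega) hln
    _ = (∑ ij ∈ antidiagonal l, (2 * l - 1).choose ij.1) * n.descFactorial l := by
        rw [← Finset.sum_mul]
    _ ≤ 2 ^ (2 * l - 1) * n.descFactorial l := by
        refine Nat.mul_le_mul_right _ ?_
        rw [Finset.Nat.sum_antidiagonal_eq_sum_range_succ_mk]
        calc ∑ k ∈ range (l + 1), (2 * l - 1).choose k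
            ≤ ∑ k ∈ range (2 * l - 1 + 1), (2 * l - 1).choose k := by
              refine Finset.sum_le_sum_of_subset ?_
              intro k hk
              simp only [Finset.mem_range] at *
              omega
          _ = 2 ^ (2 * l - 1) := Nat.sum_range_choose _

/-- For all real `x ≥ 1` and integers `l ≥ 1`,
`∑_{m ≥ 1} C(m+l-1, l) x^m / m! ≤ (4x)^l e^x`. -/
theorem stmt0 (x : ℝ) (hx : 1 ≤ x) (l : ℕ) (hl : 1 ≤ l) :
    (∑' m : ℕ, (Nat.choose (m + 1 + l - 1) l : ℝ) * x ^ (m + 1) / (Nat.factorial (m + 1)))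
      ≤ (4 * x) ^ l * Real.exp x := by
  have hx0 : (0:ℝ) < x := lt_of_lt_of_le one_pos hx
  set c : ℝ := 2 ^ (2 * l - 1) with hc
  have hc0 : (0:ℝ) ≤ c := by positivity
  set f : ℕ → ℝ := fun m => (Nat.choose (m + 1 + l - 1) l : ℝ) * x ^ (m + 1) / (Nat.factorial (m + 1)) with hf
  set h : ℕ → ℝ := fun m => if m + 1 < l then (2:ℝ) ^ (m + l) * x ^ l else 0 with hh
  set k : ℕ → ℝ := fun m => if l ≤ m + 1 then c * x ^ l * (x ^ (m + 1 - l) / (Nat.factorial (m + 1 - l))) else 0 with hk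
  have hfnonneg : ∀ m, 0 ≤ f m := fun m => by positivity
  -- termwise bound
  have hle : ∀ m, f m ≤ h m + k m := by
    intro m
    have hidx : m + 1 + l - 1 = m + l := by omega
    rcases lt_or_ge (m + 1) l with hml | hml
    · -- small m
      have hk0 : k m = 0 := by simp [hk, Nat.not_le.mpr hml]
      rw [hk0, add_zero, hh]
      simp only [if_pos hml]
      have h1 : f m ≤ (Nat.choose (m + 1 + l - 1) l : ℝ) * x ^ (m + 1) := by
        rw [hf]
        have : (1:ℝ) ≤ (Nat.factorial (m + 1) : ℝ) := by
          exact_mod_cast Nat.one_le_iff_ne_zero.mpr (Nat.factorial_ne_zero _)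
        calc (Nat.choose (m + 1 + l - 1) l : ℝ) * x ^ (m + 1) / (Nat.factorial (m + 1))
            ≤ (Nat.choose (m + 1 + l - 1) l : ℝ) * x ^ (m + 1) / 1 := by
              apply div_le_div_of_nonneg_left _ one_pos this
              positivity
          _ = (Nat.choose (m + 1 + l - 1) l : ℝ) * x ^ (m + 1) := by rw [div_one]
      refine h1.trans ?_
      have h2 : (Nat.choose (m + 1 + l - 1) l : ℝ) ≤ (2:ℝ) ^ (m + l) := by
        rw [hidx]
        exact_mod_cast myChoose_le_two_pow (m + l) l
      have h3 : x ^ (m + 1) ≤ x ^ l := pow_le_pow_right₀ hx (by omega)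
      calc (Nat.choose (m + 1 + l - 1) l : ℝ) * x ^ (m + 1)
          ≤ (2:ℝ) ^ (m + l) * x ^ l := by
            apply mul_le_mul h2 h3 (by positivity) (by positivity)
        _ = (2:ℝ) ^ (m + l) * x ^ l := rfl
    · -- large m
      have hh0 : h m = 0 := by simp [hh, Nat.not_lt.mpr hml]
      rw [hh0, zero_add, hk]
      simp only [if_pos hml]
      have hkey : (Nat.choose (m + 1 + l - 1) l : ℝ) ≤ c * ((m+1).descFactorial l : ℝ) := by
        rw [hc]
        have := myKey hl hml
        exact_mod_cast this
      have hfac : ((m + 1).factorial : ℝ) = (Nat.factorial (m + 1 - l) : ℝ) * ((m+1).descFactorial l : ℝ) := by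
        exact_mod_cast (Nat.factorial_mul_descFactorial hml).symm
      have hdpos : (0:ℝ) < ((m+1).descFactorial l : ℝ) := by
        have : 0 < (m+1).descFactorial l := by
          rw [Nat.descFactorial_eq_factorial_mul_choose]
          exact Nat.mul_pos (Nat.factorial_pos _) (Nat.choose_pos hml)
        exact_mod_cast this
      have hxpow : x ^ (m + 1) = x ^ l * x ^ (m + 1 - l) := by
        rw [← pow_add]
        congr 1
        omega
      rw [hf]
      calc (Nat.choose (m + 1 + l - 1) l : ℝ) * x ^ (m + 1) / (Nat.factorial (m + 1))
          ≤ c * ((m+1).descFactorial l : ℝ) * x ^ (m + 1) / (Nat.factorial (m + 1)) := by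
            apply div_le_div_of_nonneg_right _ (by positivity)
            exact mul_le_mul_of_nonneg_right hkey (by positivity)
        _ = c * x ^ l * (x ^ (m + 1 - l) / (Nat.factorial (m + 1 - l))) := by
            rw [hfac, hxpow]
            field_simp
  -- sum of k
  have hexp : Real.exp x = ∑' n : ℕ, x ^ n / (Nat.factorial n) := by
    rw [Real.exp_eq_exp_ℝ, NormedSpace.exp_eq_tsum_div]
  have hsumexp : HasSum (fun n : ℕ => x ^ n / (Nat.factorial n)) (Real.exp x) := by
    rw [hexp]
    exact (Real.summable_pow_div_factorial x).hasSum
  have hkS : HasSum k (c * x ^ l * Real.exp x) := by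
    have hi : Function.Injective (fun n : ℕ => n + (l - 1)) := fun a b => by simp
    have hz : ∀ m, m ∉ Set.range (fun n : ℕ => n + (l - 1)) → k m = 0 := by
      intro m hm
      have : m + 1 < l := by
        by_contra hcon
        exact hm ⟨m - (l - 1), show m - (l-1) + (l-1) = m by omega⟩
      simp [hk, Nat.not_le.mpr this]
    rw [← Function.Injective.hasSum_iff hi hz]
    have : (k ∘ fun n : ℕ => n + (l - 1)) = fun n : ℕ => c * x ^ l * (x ^ n / (Nat.factorial n)) := by
      funext n
      simp only [Function.comp, hk]
      rw [if_pos (by omega), show n + (l - 1) + 1 - l = n from by omega]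
    rw [this]
    exact hsumexp.mul_left _
  -- sum of h
  have hhz : ∀ m ∉ range (l - 1), h m = 0 := by
    intro m hm
    simp only [Finset.mem_range] at hm
    simp [hh, show ¬ (m + 1 < l) by omega]
  have hhS : Summable h := summable_of_ne_finset_zero hhz
  have hhsum : ∑' m, h m ≤ c * x ^ l := by
    rw [tsum_eq_sum hhz]
    have : ∑ m ∈ range (l - 1), h m = (∑ m ∈ range (l - 1), (2:ℝ) ^ (m + l)) * x ^ l := by
      rw [Finset.sum_mul]
      refine Finset.sum_congr rfl fun m hm => ?_
      simp only [Finset.mem_range] at hm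
      simp [hh, show m + 1 < l by omega]
    rw [this]
    have hgeom : ∑ m ∈ range (l - 1), (2:ℝ) ^ (m + l) ≤ c := by
      have h1 : ∑ m ∈ range (l - 1), (2:ℝ) ^ (m + l) = (∑ m ∈ range (l - 1), (2:ℝ) ^ m) * 2 ^ l := by
        rw [Finset.sum_mul]
        exact Finset.sum_congr rfl fun m _ => by rw [pow_add]
      rw [h1, geom_sum_eq (by norm_num : (2:ℝ) ≠ 1)]
      have h2 : ((2:ℝ) ^ (l - 1) - 1) / (2 - 1) * 2 ^ l ≤ 2 ^ (l - 1) * 2 ^ l := by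
        norm_num
      refine h2.trans ?_
      rw [hc, ← pow_add]
      apply pow_le_pow_right₀ (by norm_num)
      omega
    exact mul_le_mul_of_nonneg_right hgeom (by positivity)
  -- combine
  have hgS : Summable (fun m => h m + k m) := hhS.add hkS.summable
  have hfS : Summable f := Summable.of_nonneg_of_le hfnonneg hle hgS
  have hmain : ∑' m, f m ≤ ∑' m, (h m + k m) := Summable.tsum_le_tsum hle hfS hgS
  rw [Summable.tsum_add hhS hkS.summable, hkS.tsum_eq] at hmain
  have hfinal : ∑' m, f m ≤ c * x ^ l + c * x ^ l * Real.exp x :=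
    hmain.trans (add_le_add hhsum le_rfl)
  have hexp1 : (1:ℝ) ≤ Real.exp x := by
    rw [← Real.exp_zero]
    exact Real.exp_le_exp.mpr (by linarith)
  calc (∑' m : ℕ, (Nat.choose (m + 1 + l - 1) l : ℝ) * x ^ (m + 1) / (Nat.factorial (m + 1)))
      = ∑' m, f m := rfl
    _ ≤ c * x ^ l + c * x ^ l * Real.exp x := hfinal
    _ ≤ c * x ^ l * Real.exp x + c * x ^ l * Real.exp x := by
        nlinarith [pow_pos hx0 l, hc0, mul_nonneg hc0 (pow_pos hx0 l).le]
    _ = (2 * c) * x ^ l * Real.exp x := by ring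
    _ = (4 * x) ^ l * Real.exp x := by
        rw [hc, mul_pow]
        congr 2
        rw [← pow_succ']
        have : (4:ℝ) = 2 ^ 2 := by norm_num
        rw [this, ← pow_mul]
        congr 1
        omega
end

section
/- For k > 2·log₂ n, the probability that the longest carry-propagation chain in the addition of two independent uniform n-bit integers has length at least k is at most (n-k+1)/2^{k+1} ≤ 1/(2n). -/
open Finset

private lemma testBit_div_pow (x l j : ℕ) : (x / 2^l).testBit j = x.testBit (l + j) := by
  simp [Nat.testBit, Nat.shiftRight_eq_div_pow, Nat.div_div_eq_div_mul, ← pow_add]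

/-- Reconstruction: a number is determined by its low bits mod `2^l` and all bits from `l` on. -/
private lemma recon {l x₁ x₂ : ℕ} (hm : x₁ % 2^l = x₂ % 2^l)
    (hd : ∀ j, x₁.testBit (l + j) = x₂.testBit (l + j)) : x₁ = x₂ := by
  apply Nat.eq_of_testBit_eq
  intro i
  rcases lt_or_ge i l with h | h
  · have := congrArg (fun m => Nat.testBit m i) hm
    simpa [Nat.testBit_mod_two_pow, h] using this
  · obtain ⟨j, rfl⟩ := Nat.exists_eq_add_of_le h
    exact hd j

private lemma unpack {l r₁ r₂ q₁ q₂ : ℕ} (h1 : r₁ < 2^l) (h2 : r₂ < 2^l)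
    (h : r₁ + 2^l * q₁ = r₂ + 2^l * q₂) : r₁ = r₂ ∧ q₁ = q₂ := by
  have hp : (0:ℕ) < 2^l := Nat.pow_pos (by norm_num)
  constructor
  · have := congrArg (· % 2^l) h
    simpa [Nat.add_mul_mod_self_left, Nat.mod_eq_of_lt h1, Nat.mod_eq_of_lt h2] using this
  · have := congrArg (· / 2^l) h
    simpa [Nat.add_mul_div_left _ _ hp, Nat.div_eq_of_lt h1, Nat.div_eq_of_lt h2] using this

private lemma pack_lt {l m r q : ℕ} (hr : r < 2^l) (hq : q < m) : r + 2^l * q < 2^l * m :=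
  calc r + 2^l * q < 2^l + 2^l * q := by omega
    _ = 2^l * (q + 1) := by ring
    _ ≤ 2^l * m := Nat.mul_le_mul_left _ hq

/-- The count of pairs for a fixed block start `l`. -/
private lemma countL (n k l : ℕ) (hk : 1 ≤ k) (hln : l + k ≤ n) :
    (((Finset.range (2 ^ n)) ×ˢ (Finset.range (2 ^ n))).filter (by exact (fun p =>
        Nat.testBit p.1 l = true ∧ Nat.testBit p.2 l = true ∧
        ∀ i ∈ Finset.Ico 1 k, Nat.testBit p.1 (l + i) ≠ Nat.testBit p.2 (l + i)))).card
      ≤ 2^(n-1) * 2^(n-k) := by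
  have hl1 : l + 1 ≤ n := by omega
  have hpow : ∀ (s : ℕ), l + s ≤ n → ∀ x < 2^n, x % 2^l + 2^l * (x / 2^(l+s)) < 2^(n-s) := by
    intro s hs x hx
    have hr : x % 2^l < 2^l := Nat.mod_lt _ (Nat.pow_pos (by norm_num))
    have hq : x / 2^(l+s) < 2^(n-s-l) := by
      apply Nat.div_lt_of_lt_mul
      calc x < 2^n := hx
        _ = 2^(l+s) * 2^(n-s-l) := by rw [← pow_add]; congr 1; omega
    have := pack_lt hr hq
    calc x % 2^l + 2^l * (x / 2^(l+s)) < 2^l * 2^(n-s-l) := this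
      _ = 2^(n-s) := by rw [← pow_add]; congr 1; omega
  have hcard : (Finset.range (2^(n-1)) ×ˢ Finset.range (2^(n-k))).card = 2^(n-1) * 2^(n-k) := by
    simp
  rw [← hcard]
  apply Finset.card_le_card_of_injOn
    (f := fun p : ℕ × ℕ => (p.1 % 2^l + 2^l * (p.1 / 2^(l+1)), p.2 % 2^l + 2^l * (p.2 / 2^(l+k))))
  · rintro ⟨x, y⟩ hp
    simp only [Finset.mem_coe, Finset.mem_filter, Finset.mem_product, Finset.mem_range] at hp ⊢
    exact ⟨hpow 1 hl1 x hp.1.1, hpow k hln y hp.1.2⟩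
  · rintro ⟨x₁, y₁⟩ hp₁ ⟨x₂, y₂⟩ hp₂ heq
    simp only [Finset.mem_coe, Finset.mem_filter, Finset.mem_product, Finset.mem_range] at hp₁ hp₂
    obtain ⟨⟨hx₁, hy₁⟩, bx₁, by₁, hd₁⟩ := hp₁
    obtain ⟨⟨hx₂, hy₂⟩, bx₂, by₂, hd₂⟩ := hp₂
    have hrlt : ∀ z : ℕ, z % 2^l < 2^l := fun z => Nat.mod_lt _ (Nat.pow_pos (by norm_num))
    have h1 := Prod.mk.injEq .. ▸ heq
    simp only [Prod.mk.injEq] at heq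
    obtain ⟨hxm, hxd⟩ := unpack (hrlt x₁) (hrlt x₂) heq.1
    obtain ⟨hym, hyd⟩ := unpack (hrlt y₁) (hrlt y₂) heq.2
    have hxeq : x₁ = x₂ := by
      apply recon hxm
      intro j
      match j with
      | 0 => simp [bx₁, bx₂]
      | j + 1 =>
        have := congrArg (fun m => Nat.testBit m j) hxd
        simpa [testBit_div_pow, show l + 1 + j = l + (j+1) from by omega] using this
    refine Prod.ext hxeq ?_
    apply recon hym
    intro j
    rcases lt_or_ge j k with hj | hj
    · match j with
      | 0 => simp [by₁, by₂]
      | j + 1 =>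
        have hmem : (j + 1) ∈ Finset.Ico 1 k := by simp; omega
        have e₁ : y₁.testBit (l + (j+1)) = !x₁.testBit (l + (j+1)) := by
          have := hd₁ _ hmem
          revert this
          cases y₁.testBit (l + (j+1)) <;> cases x₁.testBit (l + (j+1)) <;> simp
        have e₂ : y₂.testBit (l + (j+1)) = !x₂.testBit (l + (j+1)) := by
          have := hd₂ _ hmem
          revert this
          cases y₂.testBit (l + (j+1)) <;> cases x₂.testBit (l + (j+1)) <;> simp
        rw [e₁, e₂, hxeq]
    · obtain ⟨m, rfl⟩ := Nat.exists_eq_add_of_le hj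
      have := congrArg (fun t => Nat.testBit t m) hyd
      simpa [testBit_div_pow, show l + k + m = l + (k + m) from by omega] using this

private lemma mainCount (n k : ℕ) (hk : 1 ≤ k) :
    (((Finset.range (2 ^ n)) ×ˢ (Finset.range (2 ^ n))).filter (by exact (fun p =>
        ∃ l ∈ Finset.range (n + 1), l + k ≤ n ∧
          Nat.testBit p.1 l = true ∧ Nat.testBit p.2 l = true ∧
          ∀ i ∈ Finset.Ico 1 k, Nat.testBit p.1 (l + i) ≠ Nat.testBit p.2 (l + i)))).card
      ≤ (n - k + 1) * (2^(n-1) * 2^(n-k)) := by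
  have hsub : (((Finset.range (2 ^ n)) ×ˢ (Finset.range (2 ^ n))).filter (by exact (fun p =>
        ∃ l ∈ Finset.range (n + 1), l + k ≤ n ∧
          Nat.testBit p.1 l = true ∧ Nat.testBit p.2 l = true ∧
          ∀ i ∈ Finset.Ico 1 k, Nat.testBit p.1 (l + i) ≠ Nat.testBit p.2 (l + i)))) ⊆
      (Finset.range (n+1)).biUnion (fun l =>
        ((Finset.range (2 ^ n)) ×ˢ (Finset.range (2 ^ n))).filter (by exact (fun p =>
          l + k ≤ n ∧ Nat.testBit p.1 l = true ∧ Nat.testBit p.2 l = true ∧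
          ∀ i ∈ Finset.Ico 1 k, Nat.testBit p.1 (l + i) ≠ Nat.testBit p.2 (l + i)))) := by
    intro p hp
    simp only [Finset.mem_filter] at hp
    obtain ⟨hps, l, hl, hlk, hq⟩ := hp
    exact Finset.mem_biUnion.2 ⟨l, hl, Finset.mem_filter.2 ⟨hps, hlk, hq⟩⟩
  refine le_trans (le_trans (Finset.card_le_card hsub) Finset.card_biUnion_le) ?_
  have hterm : ∀ l ∈ Finset.range (n+1),
      (((Finset.range (2 ^ n)) ×ˢ (Finset.range (2 ^ n))).filter (by exact (fun p =>
          l + k ≤ n ∧ Nat.testBit p.1 l = true ∧ Nat.testBit p.2 l = true ∧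
          ∀ i ∈ Finset.Ico 1 k, Nat.testBit p.1 (l + i) ≠ Nat.testBit p.2 (l + i)))).card
        ≤ if l + k ≤ n then 2^(n-1) * 2^(n-k) else 0 := by
    intro l _
    by_cases hlk : l + k ≤ n
    · simp only [hlk, if_true]
      refine le_trans (Finset.card_le_card ?_) (countL n k l hk hlk)
      intro p hp
      simp only [Finset.mem_filter] at hp ⊢
      exact ⟨hp.1, hp.2.2⟩
    · simp only [hlk, if_false, Nat.le_zero, Finset.card_eq_zero,
        Finset.filter_eq_empty_iff]
      exact fun _ _ h => h.1
  refine le_trans (Finset.sum_le_sum hterm) ?_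
  rw [← Finset.sum_filter, Finset.sum_const, smul_eq_mul]
  apply Nat.mul_le_mul_right
  calc ((Finset.range (n+1)).filter (fun l => l + k ≤ n)).card
      ≤ (Finset.range (n - k + 1)).card := by
        apply Finset.card_le_card
        intro l hl
        simp only [Finset.mem_filter, Finset.mem_range] at hl ⊢
        omega
    _ = n - k + 1 := Finset.card_range _

/-- For `k > 2 log₂ n`, the probability that the longest carry-propagation chain in the
addition of two independent uniform `n`-bit integers has length at least `k` is at most
`(n-k+1)/2^(k+1)`, which is at most `1/(2n)`.  (Here `n - k` is truncated subtraction.) -/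
theorem stmt9 (n k : ℕ) (hn : 1 ≤ n) (hk : 1 ≤ k)
    (hklarge : 2 * Real.logb 2 n < (k : ℝ)) :
    (Finset.card (((Finset.range (2 ^ n)) ×ˢ (Finset.range (2 ^ n))).filter (by exact (fun p =>
        ∃ l ∈ Finset.range (n + 1), l + k ≤ n ∧
          Nat.testBit p.1 l = true ∧ Nat.testBit p.2 l = true ∧
          ∀ i ∈ Finset.Ico 1 k, Nat.testBit p.1 (l + i) ≠ Nat.testBit p.2 (l + i)))) : ℝ)
      / ((2 ^ n) * (2 ^ n)) ≤ ((n - k : ℕ) + 1 : ℝ) / 2 ^ (k + 1) ∧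
    ((n - k : ℕ) + 1 : ℝ) / 2 ^ (k + 1) ≤ 1 / (2 * n) := by
  have hn2k : (n : ℝ)^2 < 2^(k:ℝ) := by
    rw [← Real.logb_lt_iff_lt_rpow (by norm_num) (by positivity)]
    calc Real.logb 2 ((n:ℝ)^2) = 2 * Real.logb 2 n := by
          rw [Real.logb_pow]; push_cast; ring
      _ < k := hklarge
  have hn2k' : (n:ℕ)^2 < 2^k := by
    have : ((n^2 : ℕ) : ℝ) < ((2^k : ℕ) : ℝ) := by
      push_cast
      calc ((n:ℝ))^2 < 2^(k:ℝ) := hn2k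
        _ = (2:ℝ)^k := by rw [Real.rpow_natCast]
    exact_mod_cast this
  constructor
  · rcases le_or_gt k n with hkn | hkn
    · -- main case k ≤ n
      rw [div_le_div_iff₀ (by positivity) (by positivity)]
      have hcount := mainCount n k hk
      have hnat : (((Finset.range (2 ^ n)) ×ˢ (Finset.range (2 ^ n))).filter (by exact (fun p =>
          ∃ l ∈ Finset.range (n + 1), l + k ≤ n ∧
            Nat.testBit p.1 l = true ∧ Nat.testBit p.2 l = true ∧
            ∀ i ∈ Finset.Ico 1 k, Nat.testBit p.1 (l + i) ≠ Nat.testBit p.2 (l + i)))).card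
          * 2^(k+1) ≤ (n - k + 1) * (2^n * 2^n) := by
        calc _ ≤ ((n - k + 1) * (2^(n-1) * 2^(n-k))) * 2^(k+1) :=
              Nat.mul_le_mul_right _ hcount
          _ = (n - k + 1) * (2^n * 2^n) := by
              rw [mul_assoc, mul_assoc]
              congr 1
              rw [← mul_assoc, ← pow_add, ← pow_add, ← pow_add]
              congr 1
              omega
      exact_mod_cast hnat
    · -- k > n : the set is empty
      have hempty : (((Finset.range (2 ^ n)) ×ˢ (Finset.range (2 ^ n))).filter (by exact (fun p =>
          ∃ l ∈ Finset.range (n + 1), l + k ≤ n ∧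
            Nat.testBit p.1 l = true ∧ Nat.testBit p.2 l = true ∧
            ∀ i ∈ Finset.Ico 1 k, Nat.testBit p.1 (l + i) ≠ Nat.testBit p.2 (l + i)))) = ∅ := by
        rw [Finset.filter_eq_empty_iff]
        rintro p _ ⟨l, _, hlk, _⟩
        omega
      rw [hempty]
      simp only [Finset.card_empty, Nat.cast_zero, zero_div]
      positivity
  · -- second inequality
    have hnk : ((n - k : ℕ) : ℝ) + 1 ≤ n := by
      have : n - k + 1 ≤ n := by omega
      exact_mod_cast this
    have h2k : (2:ℝ) * n^2 ≤ 2^(k+1) := by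
      have : ((2 * n^2 : ℕ) : ℝ) ≤ ((2^(k+1) : ℕ) : ℝ) := by
        exact_mod_cast (by calc 2 * n^2 ≤ 2 * 2^k := by omega
                              _ = 2^(k+1) := by ring : 2 * n^2 ≤ 2^(k+1))
      push_cast at this
      linarith
    rw [div_le_div_iff₀ (by positivity) (by positivity)]
    have hnpos : (0:ℝ) < n := by exact_mod_cast hn
    nlinarith [hnpos, hnk, h2k]
end
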